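/- arXiv:1911.00179 — 3 statements merged into one kernel-verified Lean document; each statement's English description precedes it below -/
import Mathlib

section
/- The matrix P = K + ((N + 1ᵀK1)/N²)·11ᵀ − (1/N)·K11ᵀ − (1/N)·11ᵀK with K = (T + Tᵀ)/2 is the orthogonal projection (in Frobenius norm) of T onto the set C₁ = { M ∈ ℝ^{N×N} : M = Mᵀ, M·1 = 1 }; i.e., ‖P − T‖_F ≤ ‖M − T‖_F for all M ∈ C₁. -/
open Matrix BigOperators

/-- Frobenius norm of a real matrix. -/
noncomputable def frobNorm {N : ℕ} (M : Matrix (Fin N) (Fin N) ℝ) : ℝ :=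
  Real.sqrt (∑ i, ∑ j, (M i j) ^ 2)

theorem projection_onto_C1 (N : ℕ) (hN : 0 < N)
    (T K P J : Matrix (Fin N) (Fin N) ℝ)
    (hJ : J = Matrix.of fun _ _ => (1 : ℝ))
    (hK : K = (1 / 2 : ℝ) • (T + Tᵀ))
    (hP : P = K + (((N : ℝ) + ∑ i, ∑ j, K i j) / (N : ℝ) ^ 2) • J
            - ((1 : ℝ) / (N : ℝ)) • (K * J) - ((1 : ℝ) / (N : ℝ)) • (J * K)) :
    Pᵀ = P ∧ P *ᵥ (fun _ => (1 : ℝ)) = (fun _ => 1) ∧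
    ∀ M : Matrix (Fin N) (Fin N) ℝ, Mᵀ = M → M *ᵥ (fun _ => (1 : ℝ)) = (fun _ => 1) →
      frobNorm (P - T) ≤ frobNorm (M - T) := by
  have hNpos : (0:ℝ) < N := by exact_mod_cast hN
  set c : ℝ := ((N : ℝ) + ∑ i, ∑ j, K i j) / (N : ℝ) ^ 2 with hc
  have hKsym : ∀ i j, K i j = K j i := by
    intro i j; rw [hK]; simp [Matrix.add_apply, Matrix.transpose_apply]; ring
  -- row sums of K
  set r : Fin N → ℝ := fun i => ∑ k, K i k with hr
  have hcol : ∀ j, (∑ k, K k j) = r j := by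
    intro j; rw [hr]; exact Finset.sum_congr rfl fun k _ => (hKsym k j)
  have hPe : ∀ i j, P i j = K i j + c - (1/N) * r i - (1/N) * r j := by
    intro i j
    rw [hP]
    simp [Matrix.mul_apply, Matrix.sub_apply, Matrix.add_apply, Matrix.smul_apply, hJ,
      hcol, hr]
  have hPsym : Pᵀ = P := by
    ext i j
    rw [Matrix.transpose_apply, hPe, hPe, hKsym]
    ring
  -- total sum
  have hs : (∑ i, ∑ j, K i j) = ∑ i, r i := rfl
  have hProw : ∀ i, (∑ j, P i j) = 1 := by
    intro i
    have : (∑ j, P i j) = ∑ j : Fin N, (K i j + c - (1/N) * r i - (1/N) * r j) :=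
      Finset.sum_congr rfl fun j _ => hPe i j
    rw [this]
    have hcard : (Finset.univ : Finset (Fin N)).card = N := by simp
    simp only [Finset.sum_sub_distrib, Finset.sum_add_distrib, Finset.sum_const, hcard,
      nsmul_eq_mul, ← Finset.mul_sum]
    rw [hc]
    field_simp
    ring
  have hP1 : P *ᵥ (fun _ => (1 : ℝ)) = (fun _ => 1) := by
    funext i
    simp [Matrix.mulVec, dotProduct]
    exact hProw i
  refine ⟨hPsym, hP1, ?_⟩
  intro M hMsym hM1
  have hMrow : ∀ i, (∑ j, M i j) = 1 := by
    intro i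
    have := congrFun hM1 i
    simpa [Matrix.mulVec, dotProduct] using this
  -- D = M - P, Q = P - T
  set D : Matrix (Fin N) (Fin N) ℝ := M - P with hD
  have hDrow : ∀ i, (∑ j, D i j) = 0 := by
    intro i
    simp [hD, Matrix.sub_apply, Finset.sum_sub_distrib, hMrow i, hProw i]
  have hDsym : ∀ i j, D i j = D j i := by
    intro i j
    simp [hD, Matrix.sub_apply]
    rw [← Matrix.transpose_apply M j i, hMsym, ← Matrix.transpose_apply P j i, hPsym]
  have hDcol : ∀ j, (∑ i, D i j) = 0 := by
    intro j
    rw [Finset.sum_congr rfl fun i _ => hDsym i j]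
    exact hDrow j
  -- orthogonality
  have key : (∑ i, ∑ j, D i j * (P i j - T i j)) = 0 := by
    have hQ : ∀ i j, P i j - T i j =
        ((1:ℝ)/2) * (T j i - T i j) + c - (1/N) * r i - (1/N) * r j := by
      intro i j
      rw [hPe, hK]
      simp [Matrix.add_apply, Matrix.transpose_apply]
      ring
    have e0 : (∑ i, ∑ j, D i j * (P i j - T i j)) =
        (∑ i, ∑ j, (D i j * (((1:ℝ)/2) * (T j i - T i j))
          + D i j * c - D i j * ((1/N) * r i) - D i j * ((1/N) * r j))) := by
      refine Finset.sum_congr rfl fun i _ => Finset.sum_congr rfl fun j _ => ?_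
      rw [hQ]; ring
    have e1 : (∑ i, ∑ j, D i j * (P i j - T i j)) =
        (∑ i, ∑ j, D i j * (((1:ℝ)/2) * (T j i - T i j)))
        + (∑ i, ∑ j, D i j * c)
        - (∑ i, ∑ j, D i j * ((1/N) * r i))
        - (∑ i, ∑ j, D i j * ((1/N) * r j)) := by
      rw [e0]
      simp only [Finset.sum_add_distrib, Finset.sum_sub_distrib]
    have t2 : (∑ i, ∑ j, D i j * c) = 0 := by
      simp only [← Finset.sum_mul, hDrow]
      simp
    have t3 : (∑ i, ∑ j, D i j * ((1/N) * r i)) = 0 := by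
      refine Finset.sum_eq_zero fun i _ => ?_
      rw [← Finset.sum_mul, hDrow]; ring
    have t4 : (∑ i, ∑ j, D i j * ((1/N) * r j)) = 0 := by
      rw [Finset.sum_comm]
      refine Finset.sum_eq_zero fun j _ => ?_
      rw [← Finset.sum_mul, hDcol]; ring
    have t1 : (∑ i, ∑ j, D i j * (((1:ℝ)/2) * (T j i - T i j))) = 0 := by
      have : (∑ i, ∑ j, D i j * (((1:ℝ)/2) * (T j i - T i j)))
          = - (∑ i, ∑ j, D i j * (((1:ℝ)/2) * (T j i - T i j))) := by
        conv_lhs => rw [Finset.sum_comm]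
        rw [← Finset.sum_neg_distrib]
        refine Finset.sum_congr rfl fun i _ => ?_
        rw [← Finset.sum_neg_distrib]
        refine Finset.sum_congr rfl fun j _ => ?_
        rw [hDsym j i]; ring
      linarith
    rw [e1, t1, t2, t3, t4]; ring
  -- expand squares
  have expand : (∑ i, ∑ j, (M i j - T i j)^2) =
      (∑ i, ∑ j, (D i j)^2) + 2 * (∑ i, ∑ j, D i j * (P i j - T i j))
      + (∑ i, ∑ j, (P i j - T i j)^2) := by
    rw [Finset.mul_sum, ← Finset.sum_add_distrib, ← Finset.sum_add_distrib]
    refine Finset.sum_congr rfl fun i _ => ?_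
    rw [Finset.mul_sum, ← Finset.sum_add_distrib, ← Finset.sum_add_distrib]
    refine Finset.sum_congr rfl fun j _ => ?_
    have : M i j - T i j = D i j + (P i j - T i j) := by
      simp [hD, Matrix.sub_apply]
    rw [this]; ring
  have hDsq : (0:ℝ) ≤ ∑ i, ∑ j, (D i j)^2 :=
    Finset.sum_nonneg fun i _ => Finset.sum_nonneg fun j _ => sq_nonneg _
  have hle : (∑ i, ∑ j, (P i j - T i j)^2) ≤ (∑ i, ∑ j, (M i j - T i j)^2) := by
    rw [expand, key]; linarith
  unfold frobNorm
  apply Real.sqrt_le_sqrt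
  simpa [Matrix.sub_apply] using hle
end

section
/- Suppose P ∈ ℝ^{C×N} has all entries nonnegative and satisfies P·Pᵀ = I_C. Then every column of P has at most one nonzero entry. -/
open Matrix BigOperators

theorem nonneg_orthonormal_rows_column_support (N C : ℕ) (hN : 0 < N) (hC : 0 < C)
    (P : Matrix (Fin C) (Fin N) ℝ) (hP0 : ∀ i j, 0 ≤ P i j)
    (hP : P * Pᵀ = 1) :
    ∀ j : Fin N, ∀ i i' : Fin C, P i j ≠ 0 → P i' j ≠ 0 → i = i' := by
  intro j i i' hi hi'
  by_contra hne
  have h0 : (P * Pᵀ) i i' = 0 := by rw [hP, Matrix.one_apply_ne hne]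
  rw [Matrix.mul_apply] at h0
  have hterm : ∀ k ∈ Finset.univ, 0 ≤ P i k * Pᵀ k i' := fun k _ =>
    mul_nonneg (hP0 i k) (hP0 i' k)
  have := (Finset.sum_eq_zero_iff_of_nonneg hterm).1 h0 j (Finset.mem_univ j)
  exact (mul_ne_zero hi hi') this
end

section
/- Let P ∈ ℝ^{C×N} be an entrywise nonnegative matrix with P·Pᵀ = I_C and suppose every column of P is nonzero. Then C ≤ N, and the map assigning to each column index j the unique row index i with P_{ij} > 0 is a well-defined surjection from {1,…,N} onto {1,…,C}; in particular PᵀP is a symmetric matrix whose support partitions {1,…,N} into C nonempty blocks (clusters). -/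
open Matrix BigOperators

theorem nonneg_orthonormal_rows_cluster_structure (N C : ℕ) (hN : 0 < N) (hC : 0 < C)
    (P : Matrix (Fin C) (Fin N) ℝ) (hP0 : ∀ i j, 0 ≤ P i j)
    (hP : P * Pᵀ = 1) (hcol : ∀ j : Fin N, ∃ i : Fin C, P i j ≠ 0) :
    C ≤ N ∧
    ∃ f : Fin N → Fin C,
      (∀ j, 0 < P (f j) j) ∧
      (∀ j i, 0 < P i j → i = f j) ∧
      Function.Surjective f ∧
      (Pᵀ * P)ᵀ = Pᵀ * P ∧
      (∀ j k : Fin N, 0 < (Pᵀ * P) j k ↔ f j = f k) := by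
  -- orthogonality: distinct rows have disjoint supports
  have horth : ∀ i i' : Fin C, i ≠ i' → ∀ j, P i j * P i' j = 0 := by
    intro i i' hne j
    have hsum : ∑ j, P i j * P i' j = 0 := by
      have := congrFun (congrFun hP i) i'
      simpa [Matrix.mul_apply, Matrix.transpose_apply, Matrix.one_apply, hne] using this
    have hnn : ∀ j' ∈ Finset.univ, 0 ≤ P i j' * P i' j' := fun j' _ =>
      mul_nonneg (hP0 i j') (hP0 i' j')
    exact (Finset.sum_eq_zero_iff_of_nonneg hnn).mp hsum j (Finset.mem_univ j)
  choose f hf using hcol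
  have hfpos : ∀ j, 0 < P (f j) j := fun j => lt_of_le_of_ne (hP0 _ _) (Ne.symm (hf j))
  have huniq : ∀ j i, 0 < P i j → i = f j := by
    intro j i hi
    by_contra hne
    have := horth i (f j) hne j
    exact absurd this (ne_of_gt (mul_pos hi (hfpos j)))
  have hsurj : Function.Surjective f := by
    intro i
    have hrow : ∑ j, P i j * P i j = 1 := by
      have := congrFun (congrFun hP i) i
      simpa [Matrix.mul_apply, Matrix.transpose_apply, Matrix.one_apply] using this
    have : ∃ j, P i j ≠ 0 := by
      by_contra h
      push_neg at h
      simp [h] at hrow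
    obtain ⟨j, hj⟩ := this
    exact ⟨j, (huniq j i (lt_of_le_of_ne (hP0 i j) (Ne.symm hj))).symm⟩
  refine ⟨by simpa using Fintype.card_le_of_surjective f hsurj, f, hfpos, huniq, hsurj, ?_, ?_⟩
  · ext j k
    simp [Matrix.mul_apply, Matrix.transpose_apply, mul_comm]
  · intro j k
    constructor
    · intro hpos
      have hnn : ∀ i ∈ Finset.univ, 0 ≤ P i j * P i k := fun i _ =>
        mul_nonneg (hP0 i j) (hP0 i k)
      have : ∃ i ∈ Finset.univ, 0 < P i j * P i k := by
        by_contra h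
        push_neg at h
        have : ∑ i, P i j * P i k = 0 := Finset.sum_eq_zero fun i hi =>
          le_antisymm (h i hi) (hnn i hi)
        rw [Matrix.mul_apply] at hpos
        simp only [Matrix.transpose_apply] at hpos
        linarith
      obtain ⟨i, _, hi⟩ := this
      have h1 : 0 < P i j := lt_of_le_of_ne (hP0 i j) (by
        intro h; rw [← h] at hi; simpa using hi)
      have h2 : 0 < P i k := lt_of_le_of_ne (hP0 i k) (by
        intro h; rw [← h] at hi; simpa using hi)
      rw [← huniq j i h1, ← huniq k i h2]
    · intro hfk
      rw [Matrix.mul_apply]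
      have hterm : 0 < P (f j) j * P (f j) k := by
        rw [hfk]; exact mul_pos (by rw [← hfk]; exact hfpos j) (hfpos k)
      have hnn : ∀ i ∈ Finset.univ, 0 ≤ Pᵀ j i * P i k := fun i _ =>
        mul_nonneg (hP0 i j) (hP0 i k)
      refine Finset.sum_pos' hnn ⟨f j, Finset.mem_univ _, ?_⟩
      simpa [Matrix.transpose_apply] using hterm
end
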